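/- Let q be an odd prime of a number field K, and u, v, w nonzero elements of O_K with u + v + w = 0. Set s = min(v_q(u), v_q(v), v_q(w)). The curve y² = x(x−u)(x+v) has a model with good reduction at q if and only if s is even and v_q(u) = v_q(v) = v_q(w). -/

import Mathlib

open NumberField IsDedekindDomain WeierstrassCurve Multiplicative

local notation "ℤₘ₀" => WithZero (Multiplicative ℤ)

section Helpers

lemma GR.ofAdd_le_ofAdd_iff {a b : ℤ} :
    ((ofAdd a : Multiplicative ℤ) : ℤₘ₀) ≤ (ofAdd b : Multiplicative ℤ) ↔ a ≤ b := by
  rw [WithZero.coe_le_coe, Multiplicative.ofAdd_le]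

lemma GR.ofAdd_lt_ofAdd_iff {a b : ℤ} :
    ((ofAdd a : Multiplicative ℤ) : ℤₘ₀) < (ofAdd b : Multiplicative ℤ) ↔ a < b := by
  rw [WithZero.coe_lt_coe, Multiplicative.ofAdd_lt]

lemma GR.ofAdd_eq_ofAdd_iff {a b : ℤ} :
    ((ofAdd a : Multiplicative ℤ) : ℤₘ₀) = (ofAdd b : Multiplicative ℤ) ↔ a = b := by
  rw [WithZero.coe_inj]
  exact ⟨fun h => by simpa using congrArg toAdd h, fun h => by rw [h]⟩

lemma GR.ofAdd_mul {a b : ℤ} :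
    ((ofAdd a : Multiplicative ℤ) : ℤₘ₀) * (ofAdd b : Multiplicative ℤ) =
      ((ofAdd (a + b) : Multiplicative ℤ) : ℤₘ₀) := by
  rw [← WithZero.coe_mul, ← ofAdd_add]

lemma GR.ofAdd_pow {a : ℤ} {n : ℕ} :
    ((ofAdd a : Multiplicative ℤ) : ℤₘ₀) ^ n = ((ofAdd ((n : ℤ) * a) : Multiplicative ℤ) : ℤₘ₀) := by
  rw [← WithZero.coe_pow, WithZero.coe_inj]
  exact (ofAdd_nsmul n a).symm.trans (by rw [nsmul_eq_mul])

variable {K : Type*} [Field K] [NumberField K]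

/-- Determination of the valuation from membership data. -/
lemma GR.val_eq (q : HeightOneSpectrum (𝓞 K)) (x : 𝓞 K) (hx : x ≠ 0) (n : ℕ)
    (h1 : x ∈ q.asIdeal ^ n) (h2 : x ∉ q.asIdeal ^ (n + 1)) :
    q.valuation K ((x : K)) = ((ofAdd (-(n : ℤ)) : Multiplicative ℤ) : ℤₘ₀) := by
  rw [RingOfIntegers.coe_eq_algebraMap, q.valuation_of_algebraMap]
  have hle : q.intValuation x ≤ Multiplicative.ofAdd (-(n : ℤ)) := by
    exact (q.intValuation_le_pow_iff_mem x n).mpr h1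
  have hnle : ¬ q.intValuation x ≤ Multiplicative.ofAdd (-((n + 1 : ℕ) : ℤ)) := by
    rw [show ((Multiplicative.ofAdd (-((n + 1 : ℕ) : ℤ)) : Multiplicative ℤ) : ℤₘ₀)
        = WithZero.exp (-((n + 1 : ℕ) : ℤ)) from rfl, q.intValuation_le_pow_iff_mem]
    exact h2
  have hne : q.intValuation x ≠ 0 := by
    exact q.intValuation_ne_zero x hx
  obtain ⟨m, hm⟩ := WithZero.ne_zero_iff_exists.mp hne
  rw [← hm] at hle hnle ⊢
  rw [WithZero.coe_le_coe] at hle hnle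
  rw [WithZero.coe_inj]
  have h1' : toAdd m ≤ -(n : ℤ) := hle
  have h2' : -((n : ℤ) + 1) < toAdd m := by
    have h := lt_of_not_ge hnle
    have h' : ofAdd (-((n + 1 : ℕ) : ℤ)) < ofAdd (toAdd m) := by rwa [ofAdd_toAdd]
    have := Multiplicative.ofAdd_lt.mp h'
    push_cast at this; linarith
  have h3 : toAdd m = -(n : ℤ) := by omega
  rw [← ofAdd_toAdd m, h3]

/-- 16 is a `q`-adic unit when `q` is odd. -/
lemma GR.val16 (q : HeightOneSpectrum (𝓞 K)) (hq : (2 : 𝓞 K) ∉ q.asIdeal) :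
    q.valuation K ((16 : K)) = 1 := by
  have h2 : q.valuation K ((2 : K)) = 1 := by
    have h2a : (2 : K) = algebraMap (𝓞 K) K (2 : 𝓞 K) := by
      rw [map_ofNat]
    rw [h2a]
    refine le_antisymm (q.valuation_le_one _) ?_
    by_contra hlt
    have := (q.valuation_lt_one_iff_dvd (2 : 𝓞 K)).mp (lt_of_not_ge hlt)
    rw [Ideal.dvd_span_singleton] at this
    exact hq this
  have h16 : (16 : K) = (2 : K) ^ 4 := by norm_num
  rw [h16, map_pow, h2, one_pow]


/-- Ultrametric inequality: a sum of two terms cannot have strictly smaller valuation. -/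
lemma GR.ultra (q : HeightOneSpectrum (𝓞 K)) {x y z : K} {a b c : ℤ}
    (hx : q.valuation K x = ((ofAdd (-a) : Multiplicative ℤ) : ℤₘ₀))
    (hy : q.valuation K y = ((ofAdd (-b) : Multiplicative ℤ) : ℤₘ₀))
    (hz : q.valuation K z = ((ofAdd (-c) : Multiplicative ℤ) : ℤₘ₀))
    (h : z = -(x + y)) : a ≤ c ∨ b ≤ c := by
  have hle : q.valuation K z ≤ max (q.valuation K x) (q.valuation K y) := by
    rw [h, Valuation.map_neg]
    exact (q.valuation K).map_add x y
  rw [hx, hy, hz] at hle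
  rcases le_max_iff.mp hle with h' | h' <;> rw [GR.ofAdd_le_ofAdd_iff] at h'
  · exact Or.inl (by omega)
  · exact Or.inr (by omega)

/-- Exact valuation of `z ^ 2 - x * y` when `v(z ^ 2) < v(x * y)`. -/
lemma GR.val_sq_sub (q : HeightOneSpectrum (𝓞 K)) {x y z : K} {a b c : ℤ}
    (hx : q.valuation K x = ((ofAdd (-a) : Multiplicative ℤ) : ℤₘ₀))
    (hy : q.valuation K y = ((ofAdd (-b) : Multiplicative ℤ) : ℤₘ₀))
    (hz : q.valuation K z = ((ofAdd (-c) : Multiplicative ℤ) : ℤₘ₀))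
    (hlt : a + b < 2 * c) :
    q.valuation K (z ^ 2 + -(x * y)) = ((ofAdd (-(a + b)) : Multiplicative ℤ) : ℤₘ₀) := by
  rw [Valuation.map_add_eq_of_lt_right]
  · rw [Valuation.map_neg, map_mul, hx, hy, GR.ofAdd_mul, GR.ofAdd_eq_ofAdd_iff]
    ring
  · rw [Valuation.map_neg, map_mul, map_pow, hx, hy, hz, GR.ofAdd_mul, GR.ofAdd_pow,
      GR.ofAdd_lt_ofAdd_iff]
    omega

end Helpers

theorem good_reduction_iff_valuations_equal_and_even
    (K : Type*) [Field K] [NumberField K]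
    (q : HeightOneSpectrum (𝓞 K)) (hq : (2 : 𝓞 K) ∉ q.asIdeal)
    (u v w : 𝓞 K) (hu : u ≠ 0) (hv : v ≠ 0) (hw : w ≠ 0)
    (hsum : u + v + w = 0)
    (nu nv nw : ℕ)
    (hnu : u ∈ q.asIdeal ^ nu ∧ u ∉ q.asIdeal ^ (nu + 1))
    (hnv : v ∈ q.asIdeal ^ nv ∧ v ∉ q.asIdeal ^ (nv + 1))
    (hnw : w ∈ q.asIdeal ^ nw ∧ w ∉ q.asIdeal ^ (nw + 1)) :
    let E : WeierstrassCurve K := ⟨0, (v : K) - (u : K), 0, -((u : K) * (v : K)), 0⟩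
    ((∃ C : VariableChange K,
        q.valuation K (C • E).a₁ ≤ 1 ∧
        q.valuation K (C • E).a₂ ≤ 1 ∧
        q.valuation K (C • E).a₃ ≤ 1 ∧
        q.valuation K (C • E).a₄ ≤ 1 ∧
        q.valuation K (C • E).a₆ ≤ 1 ∧
        q.valuation K (C • E).Δ = 1) ↔
      (Even (min nu (min nv nw)) ∧ nu = nv ∧ nv = nw)) := by
  intro E
  -- basic valuation facts
  have hU : q.valuation K ((u : K)) = ((ofAdd (-(nu : ℤ)) : Multiplicative ℤ) : ℤₘ₀) :=
    GR.val_eq q u hu nu hnu.1 hnu.2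
  have hV : q.valuation K ((v : K)) = ((ofAdd (-(nv : ℤ)) : Multiplicative ℤ) : ℤₘ₀) :=
    GR.val_eq q v hv nv hnv.1 hnv.2
  have hW : q.valuation K ((w : K)) = ((ofAdd (-(nw : ℤ)) : Multiplicative ℤ) : ℤₘ₀) :=
    GR.val_eq q w hw nw hnw.1 hnw.2
  have h16 : q.valuation K ((16 : K)) = 1 := GR.val16 q hq
  have hwK : (w : K) = -((u : K) + (v : K)) := by
    have := congrArg (algebraMap (𝓞 K) K) hsum
    push_cast at this
    linear_combination this
  -- discriminant of E
  have hΔE : E.Δ = (16 : K) * (u : K) ^ 2 * (v : K) ^ 2 * (w : K) ^ 2 := by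
    show (⟨0, (v : K) - (u : K), 0, -((u : K) * (v : K)), 0⟩ : WeierstrassCurve K).Δ = _
    simp only [WeierstrassCurve.Δ, WeierstrassCurve.b₂, WeierstrassCurve.b₄,
      WeierstrassCurve.b₆, WeierstrassCurve.b₈]
    rw [hwK]; ring
  have hvΔ : q.valuation K E.Δ
      = ((ofAdd (-(2 * ((nu : ℤ) + nv + nw))) : Multiplicative ℤ) : ℤₘ₀) := by
    rw [hΔE, map_mul, map_mul, map_mul, map_pow, map_pow, map_pow, h16, hU, hV, hW, one_mul,
      GR.ofAdd_pow, GR.ofAdd_pow, GR.ofAdd_pow, GR.ofAdd_mul, GR.ofAdd_mul]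
    rw [GR.ofAdd_eq_ofAdd_iff]; ring
  constructor
  · rintro ⟨C, h1, h2, h3, h4, h6, hD⟩
    -- the valuation of the scaling factor
    have huK : ((C.u : Kˣ) : K) ≠ 0 := C.u.ne_zero
    have hvu_ne : q.valuation K ((C.u : Kˣ) : K) ≠ 0 := by
      rw [Valuation.ne_zero_iff]; exact huK
    obtain ⟨κ, hκ⟩ := WithZero.ne_zero_iff_exists.mp hvu_ne
    set k : ℤ := toAdd κ with hk
    have hκ' : q.valuation K ((C.u : Kˣ) : K) = ((ofAdd k : Multiplicative ℤ) : ℤₘ₀) := by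
      rw [← hκ, hk, ofAdd_toAdd]
    have hinv : q.valuation K (((C.u⁻¹ : Kˣ) : K)) = ((ofAdd (-k) : Multiplicative ℤ) : ℤₘ₀) := by
      rw [Units.val_inv_eq_inv_val, map_inv₀, hκ', ← WithZero.coe_inv, WithZero.coe_inj,
        ofAdd_neg]
    -- the discriminant relation forces 12 ∣ 2(nu+nv+nw)
    have hDeq : (12 : ℤ) * (-k) + (-(2 * ((nu : ℤ) + nv + nw))) = 0 := by
      have h := congrArg (q.valuation K) ((variableChange_Δ (C := C) (W := E)))
      rw [hD, map_mul, map_pow, hinv, hvΔ, GR.ofAdd_pow, GR.ofAdd_mul] at h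
      have h' : ((ofAdd (0 : ℤ) : Multiplicative ℤ) : ℤₘ₀)
          = ((ofAdd ((12 : ℤ) * (-k) + (-(2 * ((nu : ℤ) + nv + nw)))) : Multiplicative ℤ) : ℤₘ₀) := by
        rw [ofAdd_zero, WithZero.coe_one]; exact h
      exact (GR.ofAdd_eq_ofAdd_iff.mp h').symm
    -- integrality of the transformed c₄
    have hc4int : q.valuation K (C • E).c₄ ≤ 1 := by
      set W := C • E with hWdef
      have m1 : W.a₁ ∈ (q.valuation K).integer := h1
      have m2 : W.a₂ ∈ (q.valuation K).integer := h2
      have m3 : W.a₃ ∈ (q.valuation K).integer := h3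
      have m4 : W.a₄ ∈ (q.valuation K).integer := h4
      have hnat : ∀ n : ℕ, ((n : K)) ∈ (q.valuation K).integer := fun n =>
        natCast_mem (q.valuation K).integer n
      have e : W.c₄ = (W.a₁ ^ 2 + 4 * W.a₂) ^ 2 - 24 * (2 * W.a₄ + W.a₁ * W.a₃) := rfl
      show W.c₄ ∈ (q.valuation K).integer
      rw [e]
      refine sub_mem (pow_mem (add_mem (pow_mem m1 2) (mul_mem ?_ m2)) 2)
        (mul_mem ?_ (add_mem (mul_mem ?_ m4) (mul_mem m1 m3)))
      · exact_mod_cast hnat 4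
      · exact_mod_cast hnat 24
      · exact_mod_cast hnat 2
    -- hence v(c₄) ≤ 4k in additive notation
    have hc4le : q.valuation K E.c₄ ≤ ((ofAdd (4 * k) : Multiplicative ℤ) : ℤₘ₀) := by
      have h := congrArg (q.valuation K) ((variableChange_c₄ (C := C) (W := E)))
      rw [map_mul, map_pow, hinv, GR.ofAdd_pow] at h
      push_cast at h
      have key : ((ofAdd (4 * k) : Multiplicative ℤ) : ℤₘ₀)
          * ((ofAdd ((4 : ℤ) * (-k)) : Multiplicative ℤ) : ℤₘ₀) = 1 := by
        rw [GR.ofAdd_mul, show 4 * k + (4 : ℤ) * (-k) = 0 by ring, ofAdd_zero, WithZero.coe_one]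
      calc q.valuation K E.c₄
          = (((ofAdd (4 * k) : Multiplicative ℤ) : ℤₘ₀)
              * ((ofAdd ((4 : ℤ) * (-k)) : Multiplicative ℤ) : ℤₘ₀)) * q.valuation K E.c₄ := by
            rw [key, one_mul]
        _ = ((ofAdd (4 * k) : Multiplicative ℤ) : ℤₘ₀)
              * q.valuation K (C • E).c₄ := by rw [mul_assoc, ← h]
        _ ≤ ((ofAdd (4 * k) : Multiplicative ℤ) : ℤₘ₀) * 1 := mul_le_mul_right hc4int _
        _ = ((ofAdd (4 * k) : Multiplicative ℤ) : ℤₘ₀) := mul_one _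
    -- auxiliary cast identities
    have huuK : (u : K) = -((v : K) + (w : K)) := by rw [hwK]; ring
    have hvvK : (v : K) = -((u : K) + (w : K)) := by rw [hwK]; ring
    -- a helper to refute the case where two of the integers are equal and less than the third
    have refute : ∀ x y z : K, ∀ a b c : ℤ,
        q.valuation K x = ((ofAdd (-a) : Multiplicative ℤ) : ℤₘ₀) →
        q.valuation K y = ((ofAdd (-b) : Multiplicative ℤ) : ℤₘ₀) →
        q.valuation K z = ((ofAdd (-c) : Multiplicative ℤ) : ℤₘ₀) →
        E.c₄ = 16 * (z ^ 2 + -(x * y)) → a + b < 2 * c → ¬ (-(a + b) ≤ 4 * k) → False := by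
      intro x y z a b c hx hy hz hform hlt hcon
      apply hcon
      rw [← GR.ofAdd_le_ofAdd_iff]
      calc ((ofAdd (-(a + b)) : Multiplicative ℤ) : ℤₘ₀)
          = q.valuation K E.c₄ := by
            rw [hform, map_mul, h16, one_mul, GR.val_sq_sub q hx hy hz hlt]
        _ ≤ ((ofAdd (4 * k) : Multiplicative ℤ) : ℤₘ₀) := hc4le
    -- now the case analysis
    rcases Nat.lt_trichotomy nu nv with hlt | heq | hlt
    · exfalso
      -- nu < nv; then nw = nu, and we refute with z = v
      have hne : nw = nu := by
        rcases GR.ultra q hU hV hW hwK with t1 | t1 <;>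
          rcases GR.ultra q hV hW hU huuK with t2 | t2 <;> omega
      refine refute (u : K) (w : K) (v : K) nu nw nv hU hW hV ?_ (by omega) (by omega)
      show (⟨0, (v : K) - (u : K), 0, -((u : K) * (v : K)), 0⟩ : WeierstrassCurve K).c₄ = _
      simp only [WeierstrassCurve.c₄, WeierstrassCurve.b₂, WeierstrassCurve.b₄]
      rw [hwK]; ring
    · rcases Nat.lt_trichotomy nv nw with hlt' | heq' | hlt'
      · exfalso
        -- nu = nv < nw; refute with z = w
        refine refute (u : K) (v : K) (w : K) nu nv nw hU hV hW ?_ (by omega) (by omega)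
        show (⟨0, (v : K) - (u : K), 0, -((u : K) * (v : K)), 0⟩ : WeierstrassCurve K).c₄ = _
        simp only [WeierstrassCurve.c₄, WeierstrassCurve.b₂, WeierstrassCurve.b₄]
        rw [hwK]; ring
      · -- all equal: conclude
        refine ⟨?_, heq, heq'⟩
        have hmin : min nu (min nv nw) = nu := by omega
        rw [hmin, Nat.even_iff]
        omega
      · exfalso
        -- nw < nv = nu : strict minimum, impossible
        rcases GR.ultra q hU hV hW hwK with h' | h' <;> omega
    · exfalso
      -- nv < nu; then nw = nv, refute with z = u
      have hne : nw = nv := by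
        rcases GR.ultra q hU hV hW hwK with t1 | t1 <;>
          rcases GR.ultra q hU hW hV hvvK with t2 | t2 <;> omega
      refine refute (v : K) (w : K) (u : K) nv nw nu hV hW hU ?_ (by omega) (by omega)
      show (⟨0, (v : K) - (u : K), 0, -((u : K) * (v : K)), 0⟩ : WeierstrassCurve K).c₄ = _
      simp only [WeierstrassCurve.c₄, WeierstrassCurve.b₂, WeierstrassCurve.b₄]
      rw [hwK]; ring
  · rintro ⟨heven, hab, hbc⟩
    have hmin : min nu (min nv nw) = nu := by omega
    rw [hmin] at heven
    obtain ⟨m, hm⟩ := heven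
    obtain ⟨π, hπ⟩ := q.valuation_exists_uniformizer K
    change _ = ((ofAdd (-1 : ℤ) : Multiplicative ℤ) : ℤₘ₀) at hπ
    have hπ0 : π ≠ 0 := by
      intro h
      rw [h, map_zero] at hπ
      exact (WithZero.coe_ne_zero (a := ofAdd (-1 : ℤ))) hπ.symm
    refine ⟨⟨Units.mk0 (π ^ m) (pow_ne_zero m hπ0), 0, 0, 0⟩, ?_⟩
    set C : VariableChange K := ⟨Units.mk0 (π ^ m) (pow_ne_zero m hπ0), 0, 0, 0⟩ with hCdef
    have hCu : ((C.u⁻¹ : Kˣ) : K) = (π ^ m)⁻¹ := by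
      rw [Units.val_inv_eq_inv_val]; rfl
    have hval_inv : q.valuation K ((π ^ m)⁻¹ : K)
        = ((ofAdd ((m : ℤ)) : Multiplicative ℤ) : ℤₘ₀) := by
      rw [map_inv₀, map_pow, hπ, GR.ofAdd_pow, ← WithZero.coe_inv, WithZero.coe_inj, ← ofAdd_neg]
      congr 1
      ring
    have hC : C • E = ⟨0, (π ^ m)⁻¹ ^ 2 * ((v : K) - (u : K)), 0,
        (π ^ m)⁻¹ ^ 4 * (-((u : K) * (v : K))), 0⟩ := by
      show C • (⟨0, (v : K) - (u : K), 0, -((u : K) * (v : K)), 0⟩ :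
        WeierstrassCurve K) = _
      simp only [variableChange_def, hCdef, hCu, Units.val_inv_eq_inv_val, Units.val_mk0]
      ext <;> dsimp only <;> ring
    have hone : ∀ t : ℤ, t = 0 → ((ofAdd t : Multiplicative ℤ) : ℤₘ₀) = 1 := by
      intro t ht; rw [ht, ofAdd_zero, WithZero.coe_one]
    refine ⟨?_, ?_, ?_, ?_, ?_, ?_⟩
    · rw [hC]; show q.valuation K 0 ≤ 1; rw [map_zero]; exact zero_le'
    · rw [hC]
      show q.valuation K ((π ^ m)⁻¹ ^ 2 * ((v : K) - (u : K))) ≤ 1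
      rw [map_mul, map_pow, hval_inv, GR.ofAdd_pow]
      have hsub : q.valuation K ((v : K) - (u : K))
          ≤ ((ofAdd (-(nu : ℤ)) : Multiplicative ℤ) : ℤₘ₀) := by
        refine le_trans (Valuation.map_sub _ _ _) ?_
        rw [hU, hV, ← hab, max_self]
      calc ((ofAdd ((2 : ℤ) * m) : Multiplicative ℤ) : ℤₘ₀) * q.valuation K ((v : K) - (u : K))
          ≤ ((ofAdd ((2 : ℤ) * m) : Multiplicative ℤ) : ℤₘ₀)
            * ((ofAdd (-(nu : ℤ)) : Multiplicative ℤ) : ℤₘ₀) := mul_le_mul_right hsub _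
        _ = 1 := by rw [GR.ofAdd_mul]; exact hone _ (by omega)
    · rw [hC]; show q.valuation K 0 ≤ 1; rw [map_zero]; exact zero_le'
    · rw [hC]
      show q.valuation K ((π ^ m)⁻¹ ^ 4 * (-((u : K) * (v : K)))) ≤ 1
      have hin : q.valuation K (-((u : K) * (v : K)))
          = ((ofAdd (-(nu : ℤ) + -(nv : ℤ)) : Multiplicative ℤ) : ℤₘ₀) := by
        rw [Valuation.map_neg, (q.valuation K).map_mul, hU, hV, GR.ofAdd_mul]
      rw [map_mul, map_pow, hval_inv, GR.ofAdd_pow, hin, GR.ofAdd_mul]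
      exact le_of_eq (hone _ (by omega))
    · rw [hC]; show q.valuation K 0 ≤ 1; rw [map_zero]; exact zero_le'
    · rw [(variableChange_Δ (C := C) (W := E)), map_mul, map_pow, hCu, hval_inv, hvΔ, GR.ofAdd_pow,
        GR.ofAdd_mul]
      exact hone _ (by omega)
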